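/- In the setting of the ℓ₁-regularized QP F(x) = (1/2)xᵀAx − bᵀx + τ‖x‖₁, suppose x satisfies F(x) ≤ F(x⁰) and the error bound F(y) − F*_y ≤ (η/(2‖A‖))‖[v(y)]_{supp(y)}‖² holds for all y with F(y) ≤ F(x⁰), where F*_y = min{F(z) : zᵢ = 0 whenever yᵢ = 0}. If ‖[v(x)]_{I₀(x)}‖ > √η ‖[v(x)]_{supp(x)}‖, then the exact-line-search point x⁺ = x − α* v_p(x) with α* = ‖v_p(x)‖²/((v_p(x))ᵀA v_p(x)) satisfies F(x⁺) < F*_x. -/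

import Mathlib

open Matrix Finset

/-- `f(x) = (1/2) xᵀAx − bᵀx`. -/
noncomputable def quadObj {n : ℕ} (A : Matrix (Fin n) (Fin n) ℝ) (b : Fin n → ℝ)
    (x : Fin n → ℝ) : ℝ :=
  (1 / 2) * (x ⬝ᵥ A.mulVec x) - b ⬝ᵥ x

/-- `F(x) = (1/2) xᵀAx − bᵀx + τ‖x‖₁`. -/
noncomputable def l1QuadObj {n : ℕ} (A : Matrix (Fin n) (Fin n) ℝ) (b : Fin n → ℝ)
    (τ : ℝ) (x : Fin n → ℝ) : ℝ :=
  quadObj A b x + τ * ∑ i, |x i|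

/-- The minimum-norm subgradient `v(x)` of `F`, given componentwise. -/
noncomputable def minSubgrad {n : ℕ} (A : Matrix (Fin n) (Fin n) ℝ) (b : Fin n → ℝ)
    (τ : ℝ) (x : Fin n → ℝ) : Fin n → ℝ := fun i =>
  if x i ≠ 0 then (A.mulVec x - b) i + τ * Real.sign (x i)
  else min ((A.mulVec x - b) i + τ) (max 0 ((A.mulVec x - b) i - τ))

/-- The projected minimum-norm subgradient `v_p(x)`: `v(x)` on `I₀(x)`, zero elsewhere. -/
noncomputable def projMinSubgrad {n : ℕ} (A : Matrix (Fin n) (Fin n) ℝ) (b : Fin n → ℝ)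
    (τ : ℝ) (x : Fin n → ℝ) : Fin n → ℝ := fun i =>
  if x i = 0 then minSubgrad A b τ x i else 0

/-- `F*_x = min{F(y) : yᵢ = 0 whenever xᵢ = 0}`. -/
noncomputable def faceOpt {n : ℕ} (A : Matrix (Fin n) (Fin n) ℝ) (b : Fin n → ℝ)
    (τ : ℝ) (x : Fin n → ℝ) : ℝ :=
  sInf (l1QuadObj A b τ '' {y | ∀ i, x i = 0 → y i = 0})

/-- Per-coordinate identity for the minimum-norm subgradient on `I₀(x)`. -/
theorem perCoordKey (g τ : ℝ) (hτ : 0 ≤ τ) :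
    g * min (g + τ) (max 0 (g - τ)) =
      (min (g + τ) (max 0 (g - τ)))^2 + τ * |min (g + τ) (max 0 (g - τ))| := by
  rcases le_total 0 (g - τ) with h1 | h1
  · rw [max_eq_right h1, min_eq_right (by linarith), abs_of_nonneg h1]; ring
  · rw [max_eq_left (by linarith)]
    rcases le_total 0 (g + τ) with h2 | h2
    · rw [min_eq_right h2]; simp
    · rw [min_eq_left h2, abs_of_nonpos h2]; ring

/-- Rayleigh-type bound via the operator norm. -/
theorem dot_le_opnorm {n : ℕ} (A : Matrix (Fin n) (Fin n) ℝ) (v : Fin n → ℝ) :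
    v ⬝ᵥ A.mulVec v ≤ ‖Matrix.toEuclideanCLM (𝕜 := ℝ) A‖ * (v ⬝ᵥ v) := by
  obtain ⟨w, hw⟩ : ∃ w : EuclideanSpace ℝ (Fin n),
      w = (WithLp.equiv 2 _).symm v := ⟨_, rfl⟩
  have h1 : v ⬝ᵥ A.mulVec v = inner ℝ w (Matrix.toEuclideanCLM (𝕜 := ℝ) A w) := by
    rw [hw]
    simp [Matrix.toEuclideanCLM_toLp, PiLp.inner_apply, dotProduct, Matrix.toLin'_apply, mul_comm]
  have h2 : v ⬝ᵥ v = ‖w‖ ^ 2 := by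
    rw [← real_inner_self_eq_norm_sq, hw]
    simp [PiLp.inner_apply, dotProduct]
    rw [EuclideanSpace.real_norm_sq_eq]; simp [sq]
  rw [h1, h2]
  calc inner ℝ w (Matrix.toEuclideanCLM (𝕜 := ℝ) A w)
      ≤ ‖w‖ * ‖Matrix.toEuclideanCLM (𝕜 := ℝ) A w‖ := real_inner_le_norm _ _
    _ ≤ ‖w‖ * (‖Matrix.toEuclideanCLM (𝕜 := ℝ) A‖ * ‖w‖) := by
        gcongr; exact (Matrix.toEuclideanCLM (𝕜 := ℝ) A).le_opNorm w
    _ = ‖Matrix.toEuclideanCLM (𝕜 := ℝ) A‖ * ‖w‖ ^ 2 := by ring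

/-- Exact behaviour of `F` along the projected-subgradient ray. -/
theorem descent_id {n : ℕ} (A : Matrix (Fin n) (Fin n) ℝ) (b : Fin n → ℝ) (τ : ℝ)
    (hA : A.PosSemidef) (hτ : 0 ≤ τ) (x : Fin n → ℝ) (t : ℝ) (ht : 0 ≤ t) :
    l1QuadObj A b τ (x - t • projMinSubgrad A b τ x) =
      l1QuadObj A b τ x
        - t * (projMinSubgrad A b τ x ⬝ᵥ projMinSubgrad A b τ x)
        + t^2/2 * (projMinSubgrad A b τ x ⬝ᵥ A.mulVec (projMinSubgrad A b τ x)) := by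
  set v := projMinSubgrad A b τ x with hv
  have hv0 : ∀ i, x i ≠ 0 → v i = 0 := by intro i h; simp [hv, projMinSubgrad, h]
  have hsymm : x ⬝ᵥ A.mulVec v = v ⬝ᵥ A.mulVec x := by
    rw [dotProduct_mulVec, ← mulVec_transpose, hA.1.eq.symm]
    rw [dotProduct_comm]
    congr 1
    simpa using congrArg (fun M => M.mulVec x) hA.1.eq.symm
  have hquad : quadObj A b (x - t • v) = quadObj A b x
      - t * (v ⬝ᵥ (A.mulVec x - b)) + t^2/2 * (v ⬝ᵥ A.mulVec v) := by
    simp only [quadObj, mulVec_sub, mulVec_smul, dotProduct_sub, sub_dotProduct,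
      dotProduct_smul, smul_dotProduct, smul_eq_mul]
    rw [hsymm, dotProduct_comm b v]
    ring
  have habs : ∑ i, |(x - t • v) i| = ∑ i, |x i| + t * ∑ i, |v i| := by
    rw [Finset.mul_sum, ← Finset.sum_add_distrib]
    refine Finset.sum_congr rfl fun i _ => ?_
    by_cases h : x i = 0
    · simp [h, abs_mul, abs_of_nonneg ht]
    · simp [hv0 i h]
  have hlin : v ⬝ᵥ (A.mulVec x - b) = (v ⬝ᵥ v) + τ * ∑ i, |v i| := by
    rw [Finset.mul_sum]
    simp only [dotProduct]
    rw [← Finset.sum_add_distrib]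
    refine Finset.sum_congr rfl fun i _ => ?_
    by_cases h : x i = 0
    · have hvi : v i = min ((A.mulVec x - b) i + τ) (max 0 ((A.mulVec x - b) i - τ)) := by
        simp [hv, projMinSubgrad, minSubgrad, h]
      rw [hvi, mul_comm, perCoordKey _ _ hτ, sq]
    · simp [hv0 i h]
  simp only [l1QuadObj, hquad, habs, hlin]
  ring

theorem stmt5 {n : ℕ} (A : Matrix (Fin n) (Fin n) ℝ) (b : Fin n → ℝ) (τ : ℝ)
    (hA : A.PosSemidef) (hτ : 0 ≤ τ)
    (hbdd : ∃ xs, ∀ y, l1QuadObj A b τ xs ≤ l1QuadObj A b τ y)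
    (x0 : Fin n → ℝ) (η : ℝ) (hη : 0 < η)
    (herr : ∀ y : Fin n → ℝ, l1QuadObj A b τ y ≤ l1QuadObj A b τ x0 →
      l1QuadObj A b τ y - faceOpt A b τ y ≤
        η / (2 * ‖Matrix.toEuclideanCLM (𝕜 := ℝ) A‖) *
          ∑ i ∈ univ.filter (fun i => y i ≠ 0), (minSubgrad A b τ y i) ^ 2)
    (x : Fin n → ℝ)
    (hx : l1QuadObj A b τ x ≤ l1QuadObj A b τ x0)
    (hbig : Real.sqrt (∑ i ∈ univ.filter (fun i => x i = 0), (minSubgrad A b τ x i) ^ 2) >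
      Real.sqrt η *
        Real.sqrt (∑ i ∈ univ.filter (fun i => x i ≠ 0), (minSubgrad A b τ x i) ^ 2)) :
    l1QuadObj A b τ
        (x - ((projMinSubgrad A b τ x ⬝ᵥ projMinSubgrad A b τ x) /
            (projMinSubgrad A b τ x ⬝ᵥ A.mulVec (projMinSubgrad A b τ x))) •
            projMinSubgrad A b τ x) <
      faceOpt A b τ x := by
  set v := projMinSubgrad A b τ x with hv
  set P := ∑ i ∈ univ.filter (fun i => x i = 0), (minSubgrad A b τ x i) ^ 2 with hP
  set S := ∑ i ∈ univ.filter (fun i => x i ≠ 0), (minSubgrad A b τ x i) ^ 2 with hS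
  set q := v ⬝ᵥ A.mulVec v with hq
  set N := ‖Matrix.toEuclideanCLM (𝕜 := ℝ) A‖ with hN
  -- ‖v‖² = P
  have hPv : v ⬝ᵥ v = P := by
    rw [hP, Finset.sum_filter, dotProduct]
    refine Finset.sum_congr rfl fun i _ => ?_
    by_cases h : x i = 0 <;> simp [hv, projMinSubgrad, h, sq]
  have hS0 : 0 ≤ S := Finset.sum_nonneg fun i _ => sq_nonneg _
  -- P > η S
  have hPS : η * S < P := by
    by_contra h
    push_neg at h
    have := Real.sqrt_le_sqrt h
    rw [Real.sqrt_mul hη.le] at this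
    exact absurd (lt_of_lt_of_le hbig this) (lt_irrefl _)
  have hP0 : 0 < P := lt_of_le_of_lt (by positivity) hPS
  -- q > 0 (else F unbounded below along the ray)
  have hq0 : 0 ≤ q := by
    have := hA.dotProduct_mulVec_nonneg v
    simpa [hq] using this
  have hqpos : 0 < q := by
    rcases hq0.lt_or_eq with h | h
    · exact h
    · exfalso
      obtain ⟨xs, hxs⟩ := hbdd
      set t : ℝ := (l1QuadObj A b τ x - l1QuadObj A b τ xs + 1) / P with htd
      have ht0 : 0 ≤ t := by
        have h1 : l1QuadObj A b τ xs ≤ l1QuadObj A b τ x := hxs x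
        exact div_nonneg (by linarith) hP0.le
      have hid := descent_id A b τ hA hτ x t ht0
      rw [← hv, ← hq, ← h, hPv, mul_zero, add_zero] at hid
      have htP : t * P = l1QuadObj A b τ x - l1QuadObj A b τ xs + 1 :=
        div_mul_cancel₀ _ hP0.ne'
      have := hxs (x - t • v)
      rw [hid, htP] at this
      linarith
  have hqN : q ≤ N * P := by rw [← hPv]; exact dot_le_opnorm A v
  have hNpos : 0 < N := by nlinarith
  -- evaluate F at x⁺
  have ht0 : (0:ℝ) ≤ (v ⬝ᵥ v) / q := by rw [hPv]; positivity
  have hid := descent_id A b τ hA hτ x ((v ⬝ᵥ v) / q) ht0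
  rw [← hv, ← hq, hPv] at hid
  rw [hPv]
  have hval : l1QuadObj A b τ (x - (P / q) • v) = l1QuadObj A b τ x - P^2 / (2*q) := by
    rw [hid]
    field_simp
    ring
  -- final strict inequality
  have hkey : η / (2 * N) * S < P^2 / (2*q) := by
    rw [div_mul_eq_mul_div, div_lt_div_iff₀ (by positivity) (by positivity)]
    nlinarith [mul_lt_mul_of_pos_right hPS hqpos, mul_le_mul_of_nonneg_left hqN hP0.le]
  calc l1QuadObj A b τ (x - (P / q) • v)
      = l1QuadObj A b τ x - P^2/(2*q) := hval
    _ ≤ (faceOpt A b τ x + η / (2*N) * S) - P^2/(2*q) := by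
        have := herr x hx
        rw [← hS] at this
        linarith
    _ < faceOpt A b τ x := by linarith
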